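/- Let |α| ≤ 1 and let (aₙ), (bₙ) satisfy |aₙ| ≤ (n+1)/2 and |bₙ| ≤ ((n-1)/2)|α| for n ≥ 2, with a₁ = 1, b₁ = 0. Then for |z| < 1: |z| + Σ_{n≥2}(|aₙ| + |bₙ|)|z|ⁿ ≤ (|z|/(1-|z|)²)·(1 - (1/2)(1-|α|)|z|). In particular any f ∈ M(α) satisfies |f(z)| ≤ (|z|/(1-|z|)²)(1 - (1-|α|)|z|/2). -/

import Mathlib

open Complex Metric

theorem stmt8
    (α : ℂ) (hα : ‖α‖ ≤ 1)
    (a b : ℕ → ℂ) (ha1 : a 1 = 1) (hb1 : b 1 = 0)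
    (habound : ∀ n : ℕ, 2 ≤ n → ‖a n‖ ≤ ((n : ℝ) + 1) / 2)
    (hbbound : ∀ n : ℕ, 2 ≤ n → ‖b n‖ ≤ (((n : ℝ) - 1) / 2) * ‖α‖)
    (f : ℂ → ℂ)
    (hf : ∀ z ∈ ball (0 : ℂ) 1,
      f z = z + (∑' k : ℕ, a (k + 2) * z ^ (k + 2)) +
        (starRingEnd ℂ) (∑' k : ℕ, b (k + 2) * z ^ (k + 2))) :
    ∀ z : ℂ, ‖z‖ < 1 →
      ‖z‖ + (∑' k : ℕ, (‖a (k + 2)‖ + ‖b (k + 2)‖) * ‖z‖ ^ (k + 2))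
          ≤ ‖z‖ / (1 - ‖z‖) ^ 2 * (1 - 1 / 2 * (1 - ‖α‖) * ‖z‖) ∧
        ‖f z‖ ≤ ‖z‖ / (1 - ‖z‖) ^ 2 * (1 - 1 / 2 * (1 - ‖α‖) * ‖z‖) := by
  intro z hz
  set r := ‖z‖ with hrdef
  have hr0 : 0 ≤ r := norm_nonneg z
  have hr1 : r < 1 := hz
  have hrn : ‖r‖ < 1 := by rwa [Real.norm_eq_abs, _root_.abs_of_nonneg hr0]
  set s := ‖α‖ with hsdef
  have hs0 : 0 ≤ s := norm_nonneg α
  have h1r : (1 : ℝ) - r ≠ 0 := by linarith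
  -- summability basics
  have hsum1 : Summable (fun n : ℕ => (n : ℝ) * r ^ n) := by
    simpa using summable_pow_mul_geometric_of_norm_lt_one 1 hrn
  have hsumg : Summable (fun n : ℕ => r ^ n) := summable_geometric_of_lt_one hr0 hr1
  have hsum2 : Summable (fun k : ℕ => ((k : ℝ) + 2) * r ^ (k + 2)) := by
    have := (summable_nat_add_iff 2).2 hsum1
    convert this using 2 with k
    push_cast
    rfl
    push_cast
    ring
  have hsumg2 : Summable (fun k : ℕ => r ^ (k + 2)) := (summable_nat_add_iff 2).2 hsumg
  -- closed forms
  have hT2 : (∑' k : ℕ, ((k : ℝ) + 2) * r ^ (k + 2)) = r / (1 - r) ^ 2 - r := by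
    have h := Summable.sum_add_tsum_nat_add 2 hsum1
    have htot : (∑' n : ℕ, (n : ℝ) * r ^ n) = r / (1 - r) ^ 2 :=
      tsum_coe_mul_geometric_of_norm_lt_one hrn
    rw [htot] at h
    have hsum : (∑ i ∈ Finset.range 2, (i : ℝ) * r ^ i) = r := by
      simp [Finset.sum_range_succ]
    rw [hsum] at h
    have : (∑' k : ℕ, ((k : ℝ) + 2) * r ^ (k + 2)) = ∑' k : ℕ, ((k + 2 : ℕ) : ℝ) * r ^ (k + 2) := by
      congr 1; funext k; push_cast; ring
    rw [this]
    linarith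
  have hG : (∑' k : ℕ, r ^ (k + 2)) = r ^ 2 / (1 - r) := by
    have : (∑' k : ℕ, r ^ (k + 2)) = (∑' k : ℕ, r ^ k) * r ^ 2 := by
      rw [← tsum_mul_right]; congr 1; funext k; rw [pow_add]
    rw [this, tsum_geometric_of_lt_one hr0 hr1]
    field_simp
  -- the dominating series
  set g : ℕ → ℝ := fun k => (1 + s) / 2 * (((k : ℝ) + 2) * r ^ (k + 2)) + (1 - s) / 2 * r ^ (k + 2)
    with hgdef
  have hgsum : Summable g := (hsum2.mul_left _).add (hsumg2.mul_left _)
  have hle : ∀ k : ℕ, (‖a (k + 2)‖ + ‖b (k + 2)‖) * r ^ (k + 2) ≤ g k := by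
    intro k
    have ha := habound (k + 2) (by omega)
    have hb := hbbound (k + 2) (by omega)
    push_cast at ha hb
    have hpr : (0 : ℝ) ≤ r ^ (k + 2) := pow_nonneg hr0 _
    have hco : ‖a (k + 2)‖ + ‖b (k + 2)‖ ≤ (1 + s) / 2 * ((k : ℝ) + 2) + (1 - s) / 2 := by
      nlinarith
    have : (‖a (k + 2)‖ + ‖b (k + 2)‖) * r ^ (k + 2)
        ≤ ((1 + s) / 2 * ((k : ℝ) + 2) + (1 - s) / 2) * r ^ (k + 2) :=
      mul_le_mul_of_nonneg_right hco hpr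
    calc (‖a (k + 2)‖ + ‖b (k + 2)‖) * r ^ (k + 2)
        ≤ ((1 + s) / 2 * ((k : ℝ) + 2) + (1 - s) / 2) * r ^ (k + 2) := this
      _ = g k := by rw [hgdef]; ring
  have hLsum : Summable (fun k : ℕ => (‖a (k + 2)‖ + ‖b (k + 2)‖) * r ^ (k + 2)) :=
    Summable.of_nonneg_of_le (fun k => by positivity) hle hgsum
  have htsumg : (∑' k : ℕ, g k)
      = (1 + s) / 2 * (r / (1 - r) ^ 2 - r) + (1 - s) / 2 * (r ^ 2 / (1 - r)) := by
    rw [hgdef, Summable.tsum_add (hsum2.mul_left _) (hsumg2.mul_left _), tsum_mul_left, tsum_mul_left,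
      hT2, hG]
  have key : r + (∑' k : ℕ, (‖a (k + 2)‖ + ‖b (k + 2)‖) * r ^ (k + 2))
      ≤ r / (1 - r) ^ 2 * (1 - 1 / 2 * (1 - s) * r) := by
    have h1 : (∑' k : ℕ, (‖a (k + 2)‖ + ‖b (k + 2)‖) * r ^ (k + 2)) ≤ ∑' k, g k :=
      Summable.tsum_le_tsum hle hLsum hgsum
    have h2 : r + ((1 + s) / 2 * (r / (1 - r) ^ 2 - r) + (1 - s) / 2 * (r ^ 2 / (1 - r)))
        = r / (1 - r) ^ 2 * (1 - 1 / 2 * (1 - s) * r) := by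
      field_simp
      ring
    rw [htsumg] at h1
    linarith
  refine ⟨key, ?_⟩
  -- second part
  have hfz := hf z (by simpa [mem_ball, dist_eq_norm] using hz)
  have hsa : Summable (fun k : ℕ => ‖a (k + 2) * z ^ (k + 2)‖) := by
    apply Summable.of_nonneg_of_le (fun k => norm_nonneg _) _ hLsum
    intro k
    rw [norm_mul, norm_pow]
    have : (0:ℝ) ≤ r ^ (k + 2) := pow_nonneg hr0 _
    nlinarith [norm_nonneg (b (k + 2))]
  have hsb : Summable (fun k : ℕ => ‖b (k + 2) * z ^ (k + 2)‖) := by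
    apply Summable.of_nonneg_of_le (fun k => norm_nonneg _) _ hLsum
    intro k
    rw [norm_mul, norm_pow]
    have : (0:ℝ) ≤ r ^ (k + 2) := pow_nonneg hr0 _
    nlinarith [norm_nonneg (a (k + 2))]
  have hA : ‖∑' k : ℕ, a (k + 2) * z ^ (k + 2)‖ ≤ ∑' k : ℕ, ‖a (k + 2)‖ * r ^ (k + 2) := by
    have := norm_tsum_le_tsum_norm hsa
    simpa [norm_mul, norm_pow] using this
  have hB : ‖∑' k : ℕ, b (k + 2) * z ^ (k + 2)‖ ≤ ∑' k : ℕ, ‖b (k + 2)‖ * r ^ (k + 2) := by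
    have := norm_tsum_le_tsum_norm hsb
    simpa [norm_mul, norm_pow] using this
  have hsa' : Summable (fun k : ℕ => ‖a (k + 2)‖ * r ^ (k + 2)) := by
    simpa [norm_mul, norm_pow] using hsa
  have hsb' : Summable (fun k : ℕ => ‖b (k + 2)‖ * r ^ (k + 2)) := by
    simpa [norm_mul, norm_pow] using hsb
  have hAB : (∑' k : ℕ, ‖a (k + 2)‖ * r ^ (k + 2)) + (∑' k : ℕ, ‖b (k + 2)‖ * r ^ (k + 2))
      = ∑' k : ℕ, (‖a (k + 2)‖ + ‖b (k + 2)‖) * r ^ (k + 2) := by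
    rw [← Summable.tsum_add hsa' hsb']
    congr 1; funext k; ring
  have hnorm : ‖f z‖ ≤ r + (∑' k : ℕ, (‖a (k + 2)‖ + ‖b (k + 2)‖) * r ^ (k + 2)) := by
    rw [hfz]
    calc ‖z + (∑' k : ℕ, a (k + 2) * z ^ (k + 2))
          + (starRingEnd ℂ) (∑' k : ℕ, b (k + 2) * z ^ (k + 2))‖
        ≤ ‖z + (∑' k : ℕ, a (k + 2) * z ^ (k + 2))‖
          + ‖(starRingEnd ℂ) (∑' k : ℕ, b (k + 2) * z ^ (k + 2))‖ := norm_add_le _ _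
      _ ≤ ‖z‖ + ‖∑' k : ℕ, a (k + 2) * z ^ (k + 2)‖
          + ‖∑' k : ℕ, b (k + 2) * z ^ (k + 2)‖ := by
          rw [RCLike.norm_conj]
          exact add_le_add_left (norm_add_le _ _) _
      _ ≤ r + (∑' k : ℕ, (‖a (k + 2)‖ + ‖b (k + 2)‖) * r ^ (k + 2)) := by
          rw [← hAB]; linarith
  linarith
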